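/- Let ι be a finite type and let U, V be sets of functions ι → ZMod 2 such that u·v = 0 for every u ∈ U and v ∈ V. Let L₀ = {ψ : Z_v ψ = ψ for all v ∈ V, and X_u ψ = ψ for all u ∈ U}. Then there exists an orthonormal basis (e_β) of L₀ such that: (1) for every w : ι → ZMod 2 with w·u = 0 for all u ∈ U, the operator Z_w maps L₀ to itself and every e_β is an eigenvector of Z_w; and (2) for every c : ι → ZMod 2 with c·v = 0 for all v ∈ V, the operator X_c maps L₀ to itself and every matrix element ⟨e_β, X_c e_γ⟩ equals 0 or 1. -/

import Mathlib

noncomputable section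

/-- The `ZMod 2`-valued dot product `u·v = ∑ j, u j * v j`. -/
def dotp {ι : Type} [Fintype ι] (u v : ι → ZMod 2) : ZMod 2 := ∑ j, u j * v j

/-- The X-type Pauli operator `X_u`: the permutation matrix with
`(X_u)_{s,t} = 1` iff `s = t + u`. -/
def Xop {ι : Type} [Fintype ι] (u : ι → ZMod 2) :
    Matrix (ι → ZMod 2) (ι → ZMod 2) ℂ :=
  Matrix.of fun s t => if s = t + u then 1 else 0

/-- The Z-type Pauli operator `Z_v`: the diagonal matrix with
`(Z_v)_{s,s} = (-1)^(v·s)`. -/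
def Zop {ι : Type} [Fintype ι] (v : ι → ZMod 2) :
    Matrix (ι → ZMod 2) (ι → ZMod 2) ℂ :=
  Matrix.of fun s t => if s = t then (-1 : ℂ) ^ (dotp v s).val else 0

/-- The standard inner product on the `ι`-qubit Hilbert space `(ι → ZMod 2) → ℂ`. -/
def qInner {ι : Type} [Fintype ι] [DecidableEq ι] (ψ φ : (ι → ZMod 2) → ℂ) : ℂ :=
  ∑ s, (starRingEnd ℂ) (ψ s) * φ s

/-- The subspace of vectors fixed by every operator in a given set of matrices. -/
def fixedSpace {ι : Type} [Fintype ι] [DecidableEq ι]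
    (Ms : Set (Matrix (ι → ZMod 2) (ι → ZMod 2) ℂ)) :
    Submodule ℂ ((ι → ZMod 2) → ℂ) :=
  ⨅ M ∈ Ms, LinearMap.ker (Matrix.mulVecLin M - LinearMap.id)
namespace Stmt6
set_option linter.unusedSectionVars false

variable {ι : Type} [Fintype ι] [DecidableEq ι]

lemma zmod2_cases (a : ZMod 2) : a = 0 ∨ a = 1 := by revert a; decide

lemma zmod2_add_self (a : ZMod 2) : a + a = 0 := by revert a; decide

lemma dotp_add_right (w a b : ι → ZMod 2) : dotp w (a + b) = dotp w a + dotp w b := by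
  simp [dotp, mul_add, Finset.sum_add_distrib]

lemma dotp_comm (u v : ι → ZMod 2) : dotp u v = dotp v u := by
  simp [dotp, mul_comm]

lemma dotp_sub_decomp (w s t : ι → ZMod 2) : dotp w s = dotp w t + dotp w (s - t) := by
  calc dotp w s = dotp w (t + (s - t)) := by rw [show t + (s - t) = s from by ring]
  _ = dotp w t + dotp w (s - t) := dotp_add_right w t (s - t)

lemma Zop_mulVec (v : ι → ZMod 2) (ψ : (ι → ZMod 2) → ℂ) :
    (Zop v).mulVec ψ = fun s => (-1 : ℂ) ^ ((dotp v s).val) * ψ s := by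
  funext s
  simp [Zop, Matrix.mulVec, dotProduct, ite_mul, Finset.sum_ite_eq]

lemma Xop_mulVec (u : ι → ZMod 2) (ψ : (ι → ZMod 2) → ℂ) :
    (Xop u).mulVec ψ = fun s => ψ (s + u) := by
  have huu : u + u = 0 := funext fun j => zmod2_add_self (u j)
  funext s
  have hiff : ∀ t : ι → ZMod 2, (s = t + u) ↔ (t = s + u) := by
    intro t
    constructor
    · rintro rfl; rw [add_assoc, huu, add_zero]
    · rintro rfl; rw [add_assoc, huu, add_zero]
  simp only [Xop, Matrix.mulVec, dotProduct, Matrix.of_apply, hiff]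
  simp [ite_mul, Finset.sum_ite_eq']

lemma mem_fixedSpace_iff (Ms : Set (Matrix (ι → ZMod 2) (ι → ZMod 2) ℂ))
    (ψ : (ι → ZMod 2) → ℂ) :
    ψ ∈ fixedSpace Ms ↔ ∀ M ∈ Ms, M.mulVec ψ = ψ := by
  simp [fixedSpace, Submodule.mem_iInf, LinearMap.mem_ker, LinearMap.sub_apply,
    Matrix.mulVecLin_apply, sub_eq_zero]

lemma Z_fix_iff (v : ι → ZMod 2) (ψ : (ι → ZMod 2) → ℂ) :
    (Zop v).mulVec ψ = ψ ↔ ∀ s, dotp v s = 1 → ψ s = 0 := by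
  rw [Zop_mulVec, funext_iff]
  constructor
  · intro h s hs
    have h2 := h s
    rw [hs, show ((1:ZMod 2)).val = 1 from rfl, pow_one] at h2
    linear_combination (-1/2 : ℂ) * h2
  · intro h s
    rcases zmod2_cases (dotp v s) with h0 | h1
    · rw [h0]; simp
    · rw [h1, h s h1]; simp

lemma X_fix_iff (u : ι → ZMod 2) (ψ : (ι → ZMod 2) → ℂ) :
    (Xop u).mulVec ψ = ψ ↔ ∀ s, ψ (s + u) = ψ s := by
  rw [Xop_mulVec, funext_iff]


open scoped Classical

variable (U V : Set (ι → ZMod 2))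

def Wsp : Submodule (ZMod 2) (ι → ZMod 2) := Submodule.span (ZMod 2) U

abbrev Qt := (ι → ZMod 2) ⧸ Wsp U

def mkq (s : ι → ZMod 2) : Qt U := Submodule.Quotient.mk s

instance : Finite (Qt U) :=
  Finite.of_surjective (mkq U) (Submodule.Quotient.mk_surjective _)

def goodQ : Qt U → Prop := fun q => ∀ s, mkq U s = q → ∀ v ∈ V, dotp v s = 0

def Bt := {q : Qt U // goodQ U V q}

instance : Finite (Bt U V) := Subtype.finite

noncomputable instance : Fintype (Bt U V) := Fintype.ofFinite _

noncomputable def c0 : ℂ := ((Real.sqrt (Nat.card (Wsp U)))⁻¹ : ℝ)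

lemma star_c0 : (starRingEnd ℂ) (c0 U) = c0 U := Complex.conj_ofReal _

lemma npos : 0 < Nat.card (Wsp U) := Nat.card_pos

lemma c0_ne : c0 U ≠ 0 := by
  have h : (0:ℝ) < Real.sqrt (Nat.card (Wsp U)) := Real.sqrt_pos.2 (by exact_mod_cast npos U)
  simp only [c0, ne_eq, Complex.ofReal_eq_zero, inv_eq_zero]
  exact h.ne'

lemma c0_mul : (Nat.card (Wsp U) : ℂ) * (c0 U * c0 U) = 1 := by
  have hn : (0:ℝ) < (Nat.card (Wsp U) : ℝ) := by exact_mod_cast npos U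
  have h : ((Nat.card (Wsp U) : ℝ)) * ((Real.sqrt (Nat.card (Wsp U)))⁻¹ *
      (Real.sqrt (Nat.card (Wsp U)))⁻¹) = 1 := by
    rw [← mul_inv, Real.mul_self_sqrt hn.le, mul_inv_cancel₀ hn.ne']
  calc (Nat.card (Wsp U) : ℂ) * (c0 U * c0 U)
      = (((Nat.card (Wsp U) : ℝ) * ((Real.sqrt (Nat.card (Wsp U)))⁻¹ *
        (Real.sqrt (Nat.card (Wsp U)))⁻¹) : ℝ) : ℂ) := by push_cast [c0]; ring
    _ = 1 := by rw [h]; norm_num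

noncomputable def fiberEquiv (t : ι → ZMod 2) :
    (Wsp U) ≃ {s : ι → ZMod 2 // mkq U s = mkq U t} where
  toFun w := ⟨t + w.1, by
    rw [mkq, mkq, Submodule.Quotient.eq]
    simpa using w.2⟩
  invFun s := ⟨s.1 - t, (Submodule.Quotient.eq _).1 s.2⟩
  left_inv w := by apply Subtype.ext; simp
  right_inv s := by apply Subtype.ext; simp

open scoped Classical in
lemma card_fiber (q : Qt U) :
    (Finset.univ.filter fun s => mkq U s = q).card = Nat.card (Wsp U) := by
  classical
  obtain ⟨t, rfl⟩ := Submodule.Quotient.mk_surjective (Wsp U) q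
  show (Finset.univ.filter fun s => mkq U s = mkq U t).card = Nat.card (Wsp U)
  rw [Nat.card_congr (fiberEquiv U t), Nat.card_eq_fintype_card, Fintype.card_subtype]

open scoped Classical in
noncomputable def ind (q : Qt U) : (ι → ZMod 2) → ℂ := fun s => if mkq U s = q then c0 U else 0

lemma qInner_ind (q q' : Qt U) :
    qInner (ind U q) (ind U q') = if q = q' then 1 else 0 := by
  classical
  rw [qInner]
  rcases eq_or_ne q q' with rfl | h
  · rw [if_pos rfl]
    have hterm : ∀ s, (starRingEnd ℂ) (ind U q s) * ind U q s =
        if mkq U s = q then c0 U * c0 U else 0 := by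
      intro s
      by_cases hs : mkq U s = q <;> simp [ind, hs, star_c0]
    rw [Finset.sum_congr rfl fun s _ => hterm s, ← Finset.sum_filter,
      Finset.sum_const, card_fiber, nsmul_eq_mul]
    exact c0_mul U
  · rw [if_neg h]
    apply Finset.sum_eq_zero
    intro s _
    by_cases hs : mkq U s = q
    · have hs' : mkq U s ≠ q' := by rw [hs]; exact h
      simp [ind, hs']
    · simp [ind, hs]

lemma ind_shift (q : Qt U) (c : ι → ZMod 2) :
    (fun s => ind U q (s + c)) = ind U (q - mkq U c) := by
  funext s
  simp only [ind]
  apply if_congr _ rfl rfl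
  rw [show mkq U (s + c) = mkq U s + mkq U c from Submodule.Quotient.mk_add _]
  exact eq_sub_iff_add_eq.symm

lemma dotp_zero_on_span (w : ι → ZMod 2) (hU : ∀ u ∈ U, dotp w u = 0) :
    ∀ x ∈ Wsp U, dotp w x = 0 := by
  intro x hx
  induction hx using Submodule.span_induction with
  | mem x h => exact hU x h
  | zero => simp [dotp]
  | add x y hx hy ihx ihy => rw [dotp_add_right, ihx, ihy, add_zero]
  | smul a x hx ih =>
    rcases zmod2_cases a with rfl | rfl
    · simp [dotp]
    · simpa using ih

lemma const_on_cosets (ψ : (ι → ZMod 2) → ℂ) (hX : ∀ u ∈ U, ∀ s, ψ (s + u) = ψ s) :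
    ∀ s t, mkq U s = mkq U t → ψ s = ψ t := by
  have key : ∀ x ∈ Wsp U, ∀ t, ψ (t + x) = ψ t := by
    intro x hx
    induction hx using Submodule.span_induction with
    | mem x h => exact fun t => hX x h t
    | zero => simp
    | add x y hx hy ihx ihy =>
      intro t
      rw [← add_assoc, ihy (t + x), ihx t]
    | smul a x hx ih =>
      rcases zmod2_cases a with rfl | rfl
      · simp
      · simpa using ih
  intro s t h
  have hst : s - t ∈ Wsp U := (Submodule.Quotient.eq _).1 h
  have h2 := key _ hst t
  rwa [show t + (s - t) = s from by ring] at h2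

lemma Z_ind (w : ι → ZMod 2) (hw : ∀ x ∈ Wsp U, dotp w x = 0) (q : Qt U)
    (t : ι → ZMod 2) (ht : mkq U t = q) :
    (Zop w).mulVec (ind U q) = ((-1 : ℂ) ^ ((dotp w t).val)) • ind U q := by
  funext s
  rw [Zop_mulVec]
  simp only [Pi.smul_apply, smul_eq_mul, ind]
  by_cases hs : mkq U s = q
  · rw [if_pos hs]
    have hmem : s - t ∈ Wsp U := by
      rw [← Submodule.Quotient.eq (Wsp U)]
      exact hs.trans ht.symm
    rw [dotp_sub_decomp w s t, hw _ hmem, add_zero]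
  · rw [if_neg hs, mul_zero, mul_zero]

noncomputable def rep (q : Qt U) : ι → ZMod 2 :=
  (Submodule.Quotient.mk_surjective (Wsp U) q).choose

lemma rep_spec (q : Qt U) : mkq U (rep U q) = q :=
  (Submodule.Quotient.mk_surjective (Wsp U) q).choose_spec

end Stmt6

open Stmt6

/-- existence of an orthonormal basis of the joint fixed subspace
`L₀ = {ψ | Z_v ψ = ψ ∀ v ∈ V, X_u ψ = ψ ∀ u ∈ U}` in which every `Z_w` commuting
with all `X_u` (`u ∈ U`) is diagonal, and every `X_c` commuting with all `Z_v`
(`v ∈ V`) has matrix elements `0` or `1`. -/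
theorem statement6 (ι : Type) [Fintype ι] [DecidableEq ι]
    (U V : Set (ι → ZMod 2))
    (hUV : ∀ u ∈ U, ∀ v ∈ V, dotp u v = 0) :
    ∃ (β : Type) (_ : Fintype β) (e : β → ((ι → ZMod 2) → ℂ)),
      (∀ b, e b ∈ fixedSpace ({M | ∃ v ∈ V, M = Zop v} ∪ {M | ∃ u ∈ U, M = Xop u})) ∧
      (∀ b, qInner (e b) (e b) = 1) ∧
      (∀ b b', b ≠ b' → qInner (e b) (e b') = 0) ∧
      (∀ ψ ∈ fixedSpace ({M | ∃ v ∈ V, M = Zop v} ∪ {M | ∃ u ∈ U, M = Xop u}),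
        ψ ∈ Submodule.span ℂ (Set.range e)) ∧
      (∀ w : ι → ZMod 2, (∀ u ∈ U, dotp w u = 0) →
        (∀ ψ ∈ fixedSpace ({M | ∃ v ∈ V, M = Zop v} ∪ {M | ∃ u ∈ U, M = Xop u}),
          (Zop w).mulVec ψ ∈
            fixedSpace ({M | ∃ v ∈ V, M = Zop v} ∪ {M | ∃ u ∈ U, M = Xop u})) ∧
        (∀ b, ∃ μ : ℂ, (Zop w).mulVec (e b) = μ • e b)) ∧
      (∀ c : ι → ZMod 2, (∀ v ∈ V, dotp c v = 0) →
        (∀ ψ ∈ fixedSpace ({M | ∃ v ∈ V, M = Zop v} ∪ {M | ∃ u ∈ U, M = Xop u}),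
          (Xop c).mulVec ψ ∈
            fixedSpace ({M | ∃ v ∈ V, M = Zop v} ∪ {M | ∃ u ∈ U, M = Xop u})) ∧
        (∀ b b', qInner (e b) ((Xop c).mulVec (e b')) = 0 ∨
                 qInner (e b) ((Xop c).mulVec (e b')) = 1)) := by
  classical
  have memL : ∀ ψ : (ι → ZMod 2) → ℂ,
      ψ ∈ fixedSpace ({M | ∃ v ∈ V, M = Zop v} ∪ {M | ∃ u ∈ U, M = Xop u}) ↔
      ((∀ v ∈ V, ∀ s, dotp v s = 1 → ψ s = 0) ∧ (∀ u ∈ U, ∀ s, ψ (s + u) = ψ s)) := by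
    intro ψ
    rw [mem_fixedSpace_iff]
    constructor
    · intro h
      exact ⟨fun v hv => (Z_fix_iff v ψ).1 (h _ (Or.inl ⟨v, hv, rfl⟩)),
             fun u hu => (X_fix_iff u ψ).1 (h _ (Or.inr ⟨u, hu, rfl⟩))⟩
    · rintro ⟨hZ, hX⟩ M hM
      rcases hM with hM | hM
      · obtain ⟨v, hv, rfl⟩ := hM
        exact (Z_fix_iff v ψ).2 (hZ v hv)
      · obtain ⟨u, hu, rfl⟩ := hM
        exact (X_fix_iff u ψ).2 (hX u hu)
  refine ⟨Bt U V, inferInstance, fun b => ind U b.1, ?_, ?_, ?_, ?_, ?_, ?_⟩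
  · -- e b ∈ L
    intro b
    rw [memL]
    constructor
    · intro v hv s hs1
      have hne : mkq U s ≠ b.1 := by
        intro h
        have h0 := b.2 s h v hv
        rw [hs1] at h0
        exact (by decide : (1 : ZMod 2) ≠ 0) h0
      simp [ind, hne]
    · intro u hu s
      have heq : mkq U (s + u) = mkq U s := by
        rw [mkq, mkq, Submodule.Quotient.eq]
        simpa [Wsp] using Submodule.subset_span hu
      simp [ind, heq]
  · -- normalization
    intro b
    simpa using qInner_ind U b.1 b.1
  · -- orthogonality
    intro b b' hne
    have h1 : b.1 ≠ b'.1 := fun h => hne (Subtype.ext h)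
    simpa [h1] using qInner_ind U b.1 b'.1
  · -- spanning
    intro ψ hψ
    rw [memL] at hψ
    obtain ⟨hZ, hX⟩ := hψ
    have hconst := const_on_cosets U ψ hX
    have hrepr : ψ = ∑ b : Bt U V, ((c0 U)⁻¹ * ψ (rep U b.1)) • ind U b.1 := by
      funext s
      rw [Finset.sum_apply]
      by_cases hgood : goodQ U V (mkq U s)
      · have hsum : ∑ b : Bt U V, (((c0 U)⁻¹ * ψ (rep U b.1)) • ind U b.1) s =
            (((c0 U)⁻¹ * ψ (rep U (⟨mkq U s, hgood⟩ : Bt U V).1)) •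
              ind U (⟨mkq U s, hgood⟩ : Bt U V).1) s :=
          Finset.sum_eq_single_of_mem _ (Finset.mem_univ _) (fun b _ hb => by
            have hne : mkq U s ≠ b.1 := fun h => hb (Subtype.ext h.symm)
            simp [ind, hne])
        rw [hsum]
        have h1 : ψ (rep U (mkq U s)) = ψ s := hconst _ _ (rep_spec U _)
        simp only [Pi.smul_apply, smul_eq_mul, ind, if_pos rfl, if_true, h1]
        field_simp [c0_ne U]
      · have hs0 : ψ s = 0 := by
          simp only [goodQ] at hgood
          push_neg at hgood
          obtain ⟨s', hs', v, hv, hvs⟩ := hgood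
          have h1 : dotp v s' = 1 := by
            rcases zmod2_cases (dotp v s') with h | h
            · exact absurd h hvs
            · exact h
          calc ψ s = ψ s' := hconst s s' hs'.symm
            _ = 0 := hZ v hv s' h1
        rw [hs0]
        symm
        apply Finset.sum_eq_zero
        intro b _
        have hne : mkq U s ≠ b.1 := fun h => hgood (h ▸ b.2)
        simp [ind, hne]
    rw [hrepr]
    exact Submodule.sum_mem _ fun b _ =>
      Submodule.smul_mem _ _ (Submodule.subset_span ⟨b, rfl⟩)
  · -- Z part
    intro w hw
    constructor
    · intro ψ hψ
      rw [memL] at hψ ⊢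
      obtain ⟨hZ, hX⟩ := hψ
      rw [Zop_mulVec]
      constructor
      · intro v hv s hs1
        simp only []
        rw [hZ v hv s hs1, mul_zero]
      · intro u hu s
        simp only []
        have h1 : dotp w (s + u) = dotp w s := by
          rw [dotp_add_right, hw u hu, add_zero]
        rw [h1, hX u hu s]
    · intro b
      exact ⟨_, Z_ind U w (dotp_zero_on_span U w hw) b.1 (rep U b.1) (rep_spec U b.1)⟩
  · -- X part
    intro c hc
    constructor
    · intro ψ hψ
      rw [memL] at hψ ⊢
      obtain ⟨hZ, hX⟩ := hψ
      rw [Xop_mulVec]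
      constructor
      · intro v hv s hs1
        simp only []
        apply hZ v hv
        rw [dotp_add_right, show dotp v c = 0 from by rw [dotp_comm]; exact hc v hv, add_zero]
        exact hs1
      · intro u hu s
        simp only []
        rw [show s + u + c = (s + c) + u from by ring, hX u hu (s + c)]
    · intro b b'
      have key : qInner (ind U b.1) ((Xop c).mulVec (ind U b'.1)) =
          if b.1 = b'.1 - mkq U c then 1 else 0 := by
        rw [Xop_mulVec, ind_shift]
        exact qInner_ind U b.1 (b'.1 - mkq U c)
      by_cases h : b.1 = b'.1 - mkq U c
      · right; rw [key, if_pos h]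
      · left; rw [key, if_neg h]
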